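/- Let L ≥ 1, x ∈ ℝ^{2L} and θ ∈ ℝ, and define the ancilla-based bias Λ^AB(θ;x) = Re Q₀₀[x](θ). Then Λ^AB(θ;x) = Σ_{l=0}^{L} μ_l(x) cos(lθ), where μ_l(x) = Σ_{y ∈ Ξ_l^{2L}, wt(y) ≡ 0 (mod 4)} ζ_y(x) − Σ_{y ∈ Ξ_l^{2L}, wt(y) ≡ 2 (mod 4)} ζ_y(x). In particular, θ ↦ Λ^AB(θ;x) is a cosine polynomial of degree at most L. -/

import Mathlib

noncomputable section

/-- The Pauli matrix `X = !![0,1;1,0]`. -/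
def Xm : Matrix (Fin 2) (Fin 2) ℂ := !![0, 1; 1, 0]

/-- The Pauli matrix `Z = !![1,0;0,−1]`. -/
def Zm : Matrix (Fin 2) (Fin 2) ℂ := !![1, 0; 0, -1]

/-- `P(θ) = cos θ • Z + sin θ • X`. -/
def Pmat (θ : ℝ) : Matrix (Fin 2) (Fin 2) ℂ :=
  (Real.cos θ : ℂ) • Zm + (Real.sin θ : ℂ) • Xm

/-- `U(θ;α) = cos α • I − i sin α • P(θ)`. -/
def Umat (θ a : ℝ) : Matrix (Fin 2) (Fin 2) ℂ :=
  (Real.cos a : ℂ) • (1 : Matrix (Fin 2) (Fin 2) ℂ) - (Complex.I * (Real.sin a : ℂ)) • Pmat θ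

/-- `V(β) = cos β • I − i sin β • Z`. -/
def Vmat (b : ℝ) : Matrix (Fin 2) (Fin 2) ℂ :=
  (Real.cos b : ℂ) • (1 : Matrix (Fin 2) (Fin 2) ℂ) - (Complex.I * (Real.sin b : ℂ)) • Zm

/-- Auxiliary recursion for `Q(θ;z)`: the boolean flag records whether the position of
the head of the list is odd (odd positions use `U(θ;·)`, even positions use `V(·)`);
the head of the list is the *rightmost* factor. -/
def Qaux (θ : ℝ) : Bool → List ℝ → Matrix (Fin 2) (Fin 2) ℂ
  | _, [] => 1
  | odd, z :: rest => Qaux θ (!odd) rest * (if odd then Umat θ z else Vmat z)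

/-- `Q(θ; (z₁,…,z_m)) = R_m(z_m) ⋯ R₂(z₂) R₁(z₁)` with `R_j = U(θ;·)` for odd `j` and
`R_j = V(·)` for even `j`. -/
def Qmat (θ : ℝ) (zs : List ℝ) : Matrix (Fin 2) (Fin 2) ℂ := Qaux θ true zs

end

/-- The generator `p` of the infinite dihedral group `C₂ * C₂`, realized as the
reflection `sr 0` in `DihedralGroup 0`. -/
def pgen : DihedralGroup 0 := DihedralGroup.sr 0

/-- The generator `q` of the infinite dihedral group `C₂ * C₂`, realized as the
reflection `sr 1` in `DihedralGroup 0`. -/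
def qgen : DihedralGroup 0 := DihedralGroup.sr 1

/-- `g^b` for a bit `b`: `g⁰ = 1`, `g¹ = g`. -/
def bpow (g : DihedralGroup 0) (b : Bool) : DihedralGroup 0 := if b then g else 1

/-- The generator at (0-based) index `i`, i.e. at 1-based position `i+1`:
`q` at odd positions, `p` at even positions. -/
def genAt (i : ℕ) : DihedralGroup 0 := if i % 2 = 0 then qgen else pgen

/-- The word `w(x) = r_n^{x_n} ⋯ r_2^{x_2} r_1^{x_1}` associated with a bit string
`x = x₁…x_n`, where `r_i = q` if `i` is odd and `r_i = p` if `i` is even. -/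
def wword {n : ℕ} (x : Fin n → Bool) : DihedralGroup 0 :=
  ((List.finRange n).reverse.map (fun i => bpow (genAt i.val) (x i))).prod

/-- The reduced word `t(u,k,v) = p^u (qp)^k q^v`. -/
def tword (u : Bool) (k : ℕ) (v : Bool) : DihedralGroup 0 :=
  bpow pgen u * (qgen * pgen) ^ k * bpow qgen v

/-- `Θⁿ_{ukv}` : the set of bit strings `x` of length `n` with `w(x) = p^u (qp)^k q^v`,
empty by convention when `k < 0`. -/
def Theta (n : ℕ) (u : Bool) (k : ℤ) (v : Bool) : Finset (Fin n → Bool) :=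
  if k < 0 then ∅ else Finset.univ.filter (fun x => wword x = tword u k.toNat v)

/-- `Ξ_l^α = Θ^α_{0,l,0} ∪ Θ^α_{1,l,0} ∪ Θ^α_{0,l−1,1} ∪ Θ^α_{1,l−1,1}`. -/
def Xi (α l : ℕ) : Finset (Fin α → Bool) :=
  Theta α false l false ∪ Theta α true l false ∪
    Theta α false ((l : ℤ) - 1) true ∪ Theta α true ((l : ℤ) - 1) true

/-- `ζ_y(x) = ∏_{a: y_a=0} cos(x_a) · ∏_{b: y_b=1} sin(x_b)`. -/
noncomputable def zeta {k : ℕ} (y : Fin k → Bool) (x : Fin k → ℝ) : ℝ :=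
  ∏ i, (if y i then Real.sin (x i) else Real.cos (x i))

/-- The Hamming weight of a bit string. -/
def hwt {k : ℕ} (y : Fin k → Bool) : ℕ := (Finset.univ.filter (fun i => y i = true)).card

section Aux

def zi (m : ZMod 0) : ℤ := m

lemma zi_add (a b : ZMod 0) : zi (a + b) = zi a + zi b := rfl
lemma zi_sub (a b : ZMod 0) : zi (a - b) = zi a - zi b := rfl

/-- index of a dihedral element -/
def idx : DihedralGroup 0 → ℤ
  | .r m => zi m
  | .sr m => zi m

def aidx (g : DihedralGroup 0) : ℕ := (idx g).natAbs

noncomputable def rho (θ : ℝ) : DihedralGroup 0 → Matrix (Fin 2) (Fin 2) ℂ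
  | .r m => !![(Real.cos (zi m * θ) : ℂ), (Real.sin (zi m * θ) : ℂ);
               (-(Real.sin (zi m * θ)) : ℂ), (Real.cos (zi m * θ) : ℂ)]
  | .sr m => !![(Real.cos (zi m * θ) : ℂ), (Real.sin (zi m * θ) : ℂ);
               ((Real.sin (zi m * θ)) : ℂ), (-(Real.cos (zi m * θ)) : ℂ)]

lemma rho_mul (θ : ℝ) (a b : DihedralGroup 0) : rho θ (a * b) = rho θ a * rho θ b := by
  cases a <;> cases b <;>
    simp only [DihedralGroup.r_mul_r, DihedralGroup.r_mul_sr, DihedralGroup.sr_mul_r,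
      DihedralGroup.sr_mul_sr, rho] <;>
    ext i j <;> fin_cases i <;> fin_cases j <;>
    simp [Matrix.mul_apply, Fin.sum_univ_two, zi_add, zi_sub, add_mul, sub_mul] <;>
    simp only [Complex.cos_add, Complex.sin_add, Complex.cos_sub, Complex.sin_sub] <;> ring

lemma rho_one (θ : ℝ) : rho θ 1 = 1 := by
  rw [DihedralGroup.one_def]
  show _ = (1 : Matrix (Fin 2) (Fin 2) ℂ)
  have h : zi 0 = 0 := rfl
  simp [rho, h, Matrix.one_fin_two]

lemma rho_p (θ : ℝ) : rho θ pgen = Zm := by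
  have h : zi 0 = 0 := rfl
  simp [rho, pgen, h, Zm]

lemma rho_q (θ : ℝ) : rho θ qgen = Pmat θ := by
  have h : zi 1 = 1 := rfl
  ext i j <;> fin_cases i <;> fin_cases j <;>
    simp [rho, qgen, h, Pmat, Zm, Xm]

lemma rho_apply00 (θ : ℝ) (g : DihedralGroup 0) :
    rho θ g 0 0 = (Real.cos (idx g * θ) : ℂ) := by
  cases g <;> simp [rho, idx]

/-- coefficient of one factor -/
noncomputable def cf (b : Bool) (z : ℝ) : ℂ :=
  if b then -(Complex.I * (Real.sin z : ℂ)) else (Real.cos z : ℂ)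

/-- word for a general assignment of generators -/
def wg {n : ℕ} (g : ℕ → DihedralGroup 0) (y : Fin n → Bool) : DihedralGroup 0 :=
  ((List.finRange n).reverse.map (fun i => bpow (g i.val) (y i))).prod

lemma wg_zero (g : ℕ → DihedralGroup 0) (y : Fin 0 → Bool) : wg g y = 1 := rfl

lemma wg_cons {n : ℕ} (g : ℕ → DihedralGroup 0) (b : Bool) (y : Fin n → Bool) :
    wg g (Fin.cons b y) = wg (fun i => g (i + 1)) y * bpow (g 0) b := by
  unfold wg
  rw [List.finRange_succ]
  simp [List.map_reverse, List.map_map, Function.comp_def]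

lemma wword_eq_wg {n : ℕ} (y : Fin n → Bool) : wword y = wg (fun i => genAt i) y := rfl

end Aux
section Aux2

/-- generalized alternating product -/
noncomputable def Qg (θ : ℝ) : (ℕ → DihedralGroup 0) → List ℝ → Matrix (Fin 2) (Fin 2) ℂ
  | _, [] => 1
  | g, z :: rest => Qg θ (fun i => g (i + 1)) rest *
      ((Real.cos z : ℂ) • (1 : Matrix (Fin 2) (Fin 2) ℂ) - (Complex.I * (Real.sin z : ℂ)) • rho θ (g 0))

/-- the generator function for parity flag `b` -/
def gfun (b : Bool) (i : ℕ) : DihedralGroup 0 := if (i + if b then 0 else 1) % 2 = 0 then qgen else pgen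

lemma gfun_succ (b : Bool) : (fun i => gfun b (i + 1)) = gfun (!b) := by
  funext i
  have h : (i + 1 + if b then 0 else 1) % 2 = (i + if !b then 0 else 1) % 2 := by
    cases b <;> simp <;> omega
  simp only [gfun, h]

lemma gfun_true : gfun true = fun i => genAt i := by
  funext i; simp [gfun, genAt]

lemma qaux_eq_qg (θ : ℝ) (zs : List ℝ) : ∀ b : Bool, Qaux θ b zs = Qg θ (gfun b) zs := by
  induction zs with
  | nil => intro b; rfl
  | cons z rest ih =>
    intro b
    rw [show Qaux θ b (z :: rest) = Qaux θ (!b) rest * (if b then Umat θ z else Vmat z) from rfl]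
    rw [show Qg θ (gfun b) (z :: rest) = Qg θ (fun i => gfun b (i + 1)) rest *
      ((Real.cos z : ℂ) • (1 : Matrix (Fin 2) (Fin 2) ℂ)
        - (Complex.I * (Real.sin z : ℂ)) • rho θ (gfun b 0)) from rfl]
    rw [gfun_succ, ih]
    congr 1
    cases b
    · simp [gfun, rho_p, Vmat]
    · simp [gfun, rho_q, Umat]

lemma qg_expand (θ : ℝ) : ∀ (n : ℕ) (g : ℕ → DihedralGroup 0) (x : Fin n → ℝ),
    Qg θ g (List.ofFn x) = ∑ y : Fin n → Bool,
      (∏ i, cf (y i) (x i)) • rho θ (wg g y) := by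
  intro n
  induction n with
  | zero =>
    intro g x
    rw [show List.ofFn x = [] by simp]
    rw [show Qg θ g [] = 1 from rfl]
    rw [Fintype.sum_unique]
    simp [wg_zero, rho_one]
  | succ n ih =>
    intro g x
    rw [List.ofFn_succ]
    rw [show Qg θ g (x 0 :: List.ofFn fun i => x i.succ)
        = Qg θ (fun i => g (i + 1)) (List.ofFn fun i => x i.succ) *
          ((Real.cos (x 0) : ℂ) • (1 : Matrix (Fin 2) (Fin 2) ℂ)
            - (Complex.I * (Real.sin (x 0) : ℂ)) • rho θ (g 0)) from rfl]
    rw [ih]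
    have hfac : (Real.cos (x 0) : ℂ) • (1 : Matrix (Fin 2) (Fin 2) ℂ)
        - (Complex.I * (Real.sin (x 0) : ℂ)) • rho θ (g 0)
        = ∑ b : Bool, cf b (x 0) • rho θ (bpow (g 0) b) := by
      rw [Fintype.sum_bool]
      simp [cf, bpow, rho_one, sub_eq_add_neg, add_comm]
    rw [hfac, Finset.sum_mul_sum, Finset.sum_comm]
    rw [← Equiv.sum_comp (Fin.consEquiv fun _ => Bool)
      (fun y => (∏ i, cf (y i) (x i)) • rho θ (wg g y))]
    rw [Fintype.sum_prod_type]
    refine Finset.sum_congr rfl fun b _ => Finset.sum_congr rfl fun y' _ => ?_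
    have hcons : (Fin.consEquiv fun _ => Bool) (b, y') = Fin.cons b y' := by
      rfl
    rw [hcons]
    rw [wg_cons, rho_mul, Fin.prod_univ_succ, smul_mul_smul_comm]
    have hprod : ∏ i : Fin n, cf ((Fin.cons b y' : Fin (n + 1) → Bool) i.succ) (x i.succ)
        = ∏ i : Fin n, cf (y' i) (x i.succ) :=
      Finset.prod_congr rfl fun i _ => by rw [Fin.cons_succ]
    rw [Fin.cons_zero, hprod, mul_comm]

lemma qmat_expand (θ : ℝ) {n : ℕ} (x : Fin n → ℝ) :
    Qmat θ (List.ofFn x) = ∑ y : Fin n → Bool,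
      (∏ i, cf (y i) (x i)) • rho θ (wword y) := by
  show Qaux θ true (List.ofFn x) = _
  rw [qaux_eq_qg, qg_expand]
  simp only [gfun_true, wword_eq_wg]

end Aux2
section Aux3

example (k : ℕ) : zi ((k : ZMod 0)) = (k : ℤ) := rfl
example (k : ℕ) : zi (-(k : ZMod 0)) = -(k : ℤ) := rfl

lemma prod_cf {n : ℕ} (y : Fin n → Bool) (x : Fin n → ℝ) :
    ∏ i, cf (y i) (x i) = (-Complex.I) ^ (hwt y) * (zeta y x : ℂ) := by
  have hsplit : ∀ i, cf (y i) (x i) =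
      (if y i = true then -Complex.I else 1) *
        ((if y i then Real.sin (x i) else Real.cos (x i) : ℝ) : ℂ) := by
    intro i; cases h : y i <;> simp [cf, h]
  rw [Finset.prod_congr rfl fun i _ => hsplit i, Finset.prod_mul_distrib]
  congr 1
  · rw [← Finset.prod_filter, Finset.prod_const, hwt]
  · rw [zeta, Complex.ofReal_prod]

lemma re_coef (w : ℕ) (r : ℝ) :
    (((-Complex.I) ^ w) * (r : ℂ)).re
      = (if w % 4 = 0 then r else if w % 4 = 2 then -r else 0) := by
  have h4 : (-Complex.I) ^ 4 = 1 := by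
    rw [show (4:ℕ) = 2 * 2 from rfl, pow_mul, neg_pow, Complex.I_sq]
    norm_num
  conv_lhs => rw [show w = 4 * (w / 4) + w % 4 by omega]
  rw [pow_add, pow_mul, h4, one_pow, one_mul]
  have hlt : w % 4 < 4 := Nat.mod_lt _ (by norm_num)
  set k := w % 4 with hk
  interval_cases k <;>
    simp [pow_succ, Complex.I_mul_I, Complex.mul_re, Complex.I_re, Complex.I_im]

lemma aidx_mul_bpow_p (h : DihedralGroup 0) (b : Bool) :
    aidx (h * bpow pgen b) = aidx h := by
  cases b
  · simp [bpow]
  · have hneg : ∀ a : ZMod 0, zi (-a) = -(zi a) := fun _ => rfl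
    have hsub : ∀ a b : ZMod 0, zi (a - b) = zi a - zi b := fun _ _ => rfl
    cases h <;>
      simp [bpow, pgen, DihedralGroup.r_mul_sr, DihedralGroup.sr_mul_sr, aidx, idx,
        hneg, hsub] <;> omega

lemma aidx_mul_bpow_q (h : DihedralGroup 0) (b : Bool) :
    aidx (h * bpow qgen b) ≤ aidx h + 1 := by
  cases b
  · simp [bpow]
  · have hneg : ∀ a : ZMod 0, zi (-a) = -(zi a) := fun _ => rfl
    have hsub : ∀ a b : ZMod 0, zi (a - b) = zi a - zi b := fun _ _ => rfl
    have hone : zi 1 = 1 := rfl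
    cases h <;>
      simp [bpow, qgen, DihedralGroup.r_mul_sr, DihedralGroup.sr_mul_sr, aidx, idx,
        hneg, hsub, hone] <;> omega

lemma aidx_wg_le : ∀ (n : ℕ) (g : ℕ → DihedralGroup 0) (y : Fin n → Bool),
    (∀ i, g i = pgen ∨ g i = qgen) →
    aidx (wg g y) ≤ ∑ i ∈ Finset.range n, (if g i = qgen then 1 else 0) := by
  intro n
  induction n with
  | zero =>
    intro g y _
    rw [wg_zero]
    simp [aidx, idx, DihedralGroup.one_def, -DihedralGroup.r_zero]
    rfl
  | succ n ih =>
    intro g y hg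
    rw [← Fin.cons_self_tail y, wg_cons]
    rw [Finset.sum_range_succ']
    rcases hg 0 with h0 | h0
    · rw [h0, aidx_mul_bpow_p]
      calc aidx (wg (fun i => g (i + 1)) (Fin.tail y))
          ≤ ∑ i ∈ Finset.range n, (if g (i + 1) = qgen then 1 else 0) :=
            ih _ _ fun i => hg (i + 1)
        _ ≤ _ := Nat.le_add_right _ _
    · rw [h0]
      have h' : aidx (wg (fun i => g (i + 1)) (Fin.tail y))
          ≤ ∑ i ∈ Finset.range n, (if g (i + 1) = qgen then 1 else 0) :=
        ih _ _ fun i => hg (i + 1)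
      have h'' := aidx_mul_bpow_q (wg (fun i => g (i + 1)) (Fin.tail y)) (y 0)
      have h''' : (if True then 1 else 0) = 1 := rfl
      simp only [if_pos rfl, h''', Fin.cons_zero]
      omega

lemma pgen_ne_qgen : pgen ≠ qgen := by
  simp only [pgen, qgen, ne_eq, DihedralGroup.sr.injEq]
  intro h
  exact absurd (congrArg zi h) (by decide)

lemma sum_genAt (L : ℕ) :
    ∑ i ∈ Finset.range (2 * L), (if genAt i = qgen then 1 else 0) = L := by
  induction L with
  | zero => simp
  | succ L ih =>
    rw [show 2 * (L + 1) = (2 * L) + 1 + 1 by ring, Finset.sum_range_succ,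
      Finset.sum_range_succ, ih]
    have h1 : genAt (2 * L) = qgen := by simp [genAt, Nat.mul_mod_right]
    have h2 : genAt (2 * L + 1) = pgen := by
      have : (2 * L + 1) % 2 = 1 := by omega
      simp [genAt, this]
    rw [h1, h2, if_pos rfl, if_neg pgen_ne_qgen]

lemma aidx_wword_le (L : ℕ) (y : Fin (2 * L) → Bool) : aidx (wword y) ≤ L := by
  rw [wword_eq_wg]
  calc aidx (wg (fun i => genAt i) y)
      ≤ ∑ i ∈ Finset.range (2 * L), (if genAt i = qgen then 1 else 0) :=
        aidx_wg_le _ _ _ fun i => by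
          by_cases h : i % 2 = 0 <;> simp [genAt, h]
    _ = L := sum_genAt L

end Aux3
section Aux4

lemma zi_eq {a b : ZMod 0} (h : zi a = zi b) : a = b := h

lemma qp : qgen * pgen = DihedralGroup.r (0 - 1) := by
  rw [qgen, pgen, DihedralGroup.sr_mul_sr]

lemma qp_pow (k : ℕ) : (qgen * pgen) ^ k = DihedralGroup.r (-(k : ZMod 0)) := by
  induction k with
  | zero =>
    rw [pow_zero, DihedralGroup.one_def]
    norm_num
  | succ k ih =>
    rw [pow_succ, ih, qp, DihedralGroup.r_mul_r]
    refine congrArg _ (zi_eq ?_)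
    show -((k:ℕ):ℤ) + ((0:ℤ) - 1) = -(((k+1:ℕ)):ℤ)
    push_cast; ring

lemma tword_ff (k : ℕ) : tword false k false = .r (-(k : ZMod 0)) := by
  rw [tword, qp_pow]; simp [bpow]

lemma tword_tf (k : ℕ) : tword true k false = .sr (-(k : ZMod 0)) := by
  rw [tword, qp_pow]
  simp [bpow, pgen, DihedralGroup.sr_mul_r]

lemma tword_ft (k : ℕ) : tword false k true = .sr ((k : ZMod 0) + 1) := by
  rw [tword, qp_pow]
  simp [bpow, qgen, DihedralGroup.r_mul_sr]
  ring

lemma tword_tt (k : ℕ) : tword true k true = .r ((k : ZMod 0) + 1) := by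
  rw [tword, qp_pow]
  simp [bpow, qgen, pgen, DihedralGroup.sr_mul_r, DihedralGroup.sr_mul_sr]
  ring

end Aux4
section Aux4b

lemma zi_natCast (k : ℕ) : zi ((k : ZMod 0)) = (k : ℤ) := rfl
lemma zi_neg_natCast (k : ℕ) : zi (-(k : ZMod 0)) = -(k : ℤ) := rfl
lemma zi_natCast_add_one (k : ℕ) : zi ((k : ZMod 0) + 1) = (k : ℤ) + 1 := rfl

lemma aidx_r (m : ZMod 0) : aidx (.r m) = (zi m).natAbs := rfl
lemma aidx_sr (m : ZMod 0) : aidx (.sr m) = (zi m).natAbs := rfl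

lemma eq_tword_iff (g : DihedralGroup 0) (l : ℕ) :
    aidx g = l ↔ (g = tword false l false ∨ g = tword true l false ∨
      (1 ≤ l ∧ (g = tword false (l - 1) true ∨ g = tword true (l - 1) true))) := by
  constructor
  · intro h
    cases g with
    | r m =>
      rw [aidx_r] at h
      rcases le_or_gt (zi m) 0 with hm | hm
      · left
        rw [tword_ff]
        exact congrArg _ (zi_eq (by rw [zi_neg_natCast]; omega))
      · right; right
        refine ⟨by omega, Or.inr ?_⟩
        rw [tword_tt]
        refine congrArg _ (zi_eq ?_)
        rw [zi_natCast_add_one]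
        omega
    | sr m =>
      rw [aidx_sr] at h
      rcases le_or_gt (zi m) 0 with hm | hm
      · right; left
        rw [tword_tf]
        exact congrArg _ (zi_eq (by rw [zi_neg_natCast]; omega))
      · right; right
        refine ⟨by omega, Or.inl ?_⟩
        rw [tword_ft]
        refine congrArg _ (zi_eq ?_)
        rw [zi_natCast_add_one]
        omega
  · rintro (rfl | rfl | ⟨hl, rfl | rfl⟩)
    · rw [tword_ff, aidx_r, zi_neg_natCast]; omega
    · rw [tword_tf, aidx_sr, zi_neg_natCast]; omega
    · rw [tword_ft, aidx_sr, zi_natCast_add_one]; omega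
    · rw [tword_tt, aidx_r, zi_natCast_add_one]; omega

lemma mem_Xi {n : ℕ} (l : ℕ) (y : Fin n → Bool) :
    y ∈ Xi n l ↔ aidx (wword y) = l := by
  rw [eq_tword_iff]
  unfold Xi Theta
  have h1 : ¬ ((l : ℤ) < 0) := by omega
  by_cases hl : l = 0
  · subst hl
    norm_num
  · have h2 : ¬ ((l : ℤ) - 1 < 0) := by omega
    have h3 : ((l : ℤ)).toNat = l := by omega
    have h4 : ((l : ℤ) - 1).toNat = l - 1 := by omega
    simp only [if_neg h1, if_neg h2, h3, h4, Finset.mem_union, Finset.mem_filter,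
      Finset.mem_univ, true_and]
    have h5 : 1 ≤ l := by omega
    tauto

lemma Xi_eq_filter {n : ℕ} (l : ℕ) :
    Xi n l = Finset.univ.filter (fun y => aidx (wword y) = l) := by
  ext y
  simp [mem_Xi]

end Aux4b

lemma cos_aidx (θ : ℝ) (g : DihedralGroup 0) :
    Real.cos ((idx g : ℝ) * θ) = Real.cos ((aidx g : ℝ) * θ) := by
  have h : ((aidx g : ℝ)) = |(idx g : ℝ)| := by
    rw [aidx, Nat.cast_natAbs, Int.cast_abs]
  rw [h]
  rcases abs_cases ((idx g : ℝ)) with ⟨h1, _⟩ | ⟨h1, _⟩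
  · rw [h1]
  · rw [h1, neg_mul, Real.cos_neg]


/-- the ancilla-based bias `Λ^AB(θ;x) = Re Q₀₀[x](θ)` has the cosine
expansion `Σ_{l=0}^{L} μ_l(x) cos(lθ)` with
`μ_l(x) = Σ_{y ∈ Ξ_l^{2L}, wt(y) ≡ 0 (4)} ζ_y(x) − Σ_{y ∈ Ξ_l^{2L}, wt(y) ≡ 2 (4)} ζ_y(x)`. -/
theorem statement18 (L : ℕ) (hL : 1 ≤ L) (x : Fin (2 * L) → ℝ) (θ : ℝ) :
    (Qmat θ (List.ofFn x) 0 0).re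
      = ∑ l ∈ Finset.range (L + 1),
          ((∑ y ∈ (Xi (2 * L) l).filter (fun y => hwt y % 4 = 0), zeta y x) -
            (∑ y ∈ (Xi (2 * L) l).filter (fun y => hwt y % 4 = 2), zeta y x)) *
            Real.cos (l * θ) := by
  rw [qmat_expand, Matrix.sum_apply, Complex.re_sum]
  have key : ∀ y : Fin (2 * L) → Bool,
      (((∏ i, cf (y i) (x i)) • rho θ (wword y)) 0 0).re
        = (if hwt y % 4 = 0 then zeta y x
            else if hwt y % 4 = 2 then -(zeta y x) else 0)
            * Real.cos ((aidx (wword y) : ℝ) * θ) := by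
    intro y
    rw [Matrix.smul_apply, smul_eq_mul, rho_apply00, prod_cf, cos_aidx]
    rw [mul_assoc, ← Complex.ofReal_mul, re_coef]
    split_ifs <;> ring
  rw [Finset.sum_congr rfl fun y _ => key y]
  rw [← Finset.sum_fiberwise_of_maps_to (g := fun y => aidx (wword y))
      (t := Finset.range (L + 1))
      (fun y _ => Finset.mem_range.mpr (by show aidx (wword y) < L + 1; have := aidx_wword_le L y; omega))]
  refine Finset.sum_congr rfl fun l hl => ?_
  have hXi : Finset.univ.filter (fun y => aidx (wword y) = l) = Xi (2 * L) l :=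
    (Xi_eq_filter l).symm
  rw [hXi]
  rw [Finset.sum_congr rfl (fun y hy => by rw [(mem_Xi l y).mp hy])]
  rw [← Finset.sum_mul]
  congr 1
  rw [Finset.sum_filter, Finset.sum_filter, ← Finset.sum_sub_distrib]
  refine Finset.sum_congr rfl fun y _ => ?_
  by_cases h0 : hwt y % 4 = 0
  · have h2 : ¬ (hwt y % 4 = 2) := by omega
    simp [h0, h2]
  · by_cases h2 : hwt y % 4 = 2 <;> simp [h0, h2]
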